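/- Let L be a positive integer and let μ satisfy the two difference conditions of Assumption 2: l·μ(l,m+1) − l·μ(l,m) is non-increasing in m and non-decreasing in l, and (l+1)·μ(l+1,m) − l·μ(l,m) is non-increasing in l and non-decreasing in m. Define (l,m) with 1 ≤ m, l ≤ L−1 to be type 1 if l·μ(l,m) > (l+1)·μ(l+1,m−1), and also declare all states with m = 0 or l = L type 1. Then for any type 1 state (l',m') and any state (l,m) with l ≥ l' and m ≤ m', (l,m) is also type 1. Consequently, if (l',m') fails to be type 1 (is 'type 2'), then so does every (l,m) with l ≤ l' and m ≥ m'. -/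
import Mathlib


/-- A state `(l, m)` is type 1 if `m = 0`, or `l = L`, or its total service rate
exceeds that of its lower-left neighbour. -/
def IsType1 (L : ℕ) (μ : ℕ → ℕ → ℝ) (l m : ℕ) : Prop :=
  m = 0 ∨ l = L ∨ (l : ℝ) * μ l m > ((l : ℝ) + 1) * μ (l + 1) (m - 1)

/-- Lemma 2 of the paper: under Assumption 2, type 1 states are downward-left closed
and type 2 states are upward-right closed. -/
theorem stmt2
    (L : ℕ) (hL : 0 < L) (μ : ℕ → ℕ → ℝ)
    (hpos : ∀ l, l ≤ L → ∀ m, 0 < μ l m)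
    (h1m : ∀ l, l ≤ L → ∀ m,
      (l : ℝ) * μ l (m + 2) - (l : ℝ) * μ l (m + 1) ≤
        (l : ℝ) * μ l (m + 1) - (l : ℝ) * μ l m)
    (h1l : ∀ l, l + 1 ≤ L → ∀ m,
      (l : ℝ) * μ l (m + 1) - (l : ℝ) * μ l m ≤
        ((l : ℝ) + 1) * μ (l + 1) (m + 1) - ((l : ℝ) + 1) * μ (l + 1) m)
    (h2l : ∀ l, l + 2 ≤ L → ∀ m,
      ((l : ℝ) + 2) * μ (l + 2) m - ((l : ℝ) + 1) * μ (l + 1) m ≤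
        ((l : ℝ) + 1) * μ (l + 1) m - (l : ℝ) * μ l m)
    (h2m : ∀ l, l + 1 ≤ L → ∀ m,
      ((l : ℝ) + 1) * μ (l + 1) m - (l : ℝ) * μ l m ≤
        ((l : ℝ) + 1) * μ (l + 1) (m + 1) - (l : ℝ) * μ l (m + 1)) :
    (∀ l' m', l' ≤ L → IsType1 L μ l' m' →
      ∀ l m, l' ≤ l → l ≤ L → m ≤ m' → IsType1 L μ l m) ∧
    (∀ l' m', l' ≤ L → ¬ IsType1 L μ l' m' →
      ∀ l m, l ≤ l' → m' ≤ m → ¬ IsType1 L μ l m) := by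

  have stepM : ∀ l m, l ≤ L → IsType1 L μ l (m + 1) → IsType1 L μ l m := by
    intro l m hlL ht
    rcases ht with h | h | h
    · omega
    · exact Or.inr (Or.inl h)
    · rcases Nat.eq_or_lt_of_le hlL with hEq | hlt
      · exact Or.inr (Or.inl hEq)
      · rcases Nat.eq_zero_or_pos m with rfl | hm
        · exact Or.inl rfl
        · obtain ⟨k, rfl⟩ := Nat.exists_eq_succ_of_ne_zero (Nat.pos_iff_ne_zero.mp hm)
          refine Or.inr (Or.inr ?_)
          have hA := h1l l hlt k
          have hB := h1m l hlL k
          simp only [Nat.succ_eq_add_one, Nat.add_sub_cancel] at h ⊢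
          linarith
  have stepL : ∀ l m, l + 1 ≤ L → IsType1 L μ l m → IsType1 L μ (l + 1) m := by
    intro l m hlL ht
    rcases ht with h | h | h
    · exact Or.inl h
    · omega
    · rcases Nat.eq_or_lt_of_le hlL with hEq | hlt
      · exact Or.inr (Or.inl hEq)
      · rcases Nat.eq_zero_or_pos m with rfl | hm
        · exact Or.inl rfl
        · obtain ⟨k, rfl⟩ := Nat.exists_eq_succ_of_ne_zero (Nat.pos_iff_ne_zero.mp hm)
          refine Or.inr (Or.inr ?_)
          have hA := h2l l hlt k
          have hB := h2m l hlL k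
          simp only [Nat.succ_eq_add_one, Nat.add_sub_cancel] at h ⊢
          push_cast at h hA hB ⊢
          linarith
  have downM : ∀ l, l ≤ L → ∀ m d, IsType1 L μ l (m + d) → IsType1 L μ l m := by
    intro l hlL m d
    induction d with
    | zero => exact fun h => h
    | succ n ih => intro h; exact ih (stepM l (m + n) hlL h)
  have upL : ∀ m l d, l + d ≤ L → IsType1 L μ l m → IsType1 L μ (l + d) m := by
    intro m l d
    induction d with
    | zero => exact fun _ h => h
    | succ n ih =>
      intro hle h
      have := ih (by omega) h
      have := stepL (l + n) m (by omega) this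
      exact this
  have part1 : ∀ l' m', l' ≤ L → IsType1 L μ l' m' →
      ∀ l m, l' ≤ l → l ≤ L → m ≤ m' → IsType1 L μ l m := by
    intro l' m' hl' ht l m hll hlL hmm
    obtain ⟨d, rfl⟩ := Nat.exists_eq_add_of_le hmm
    obtain ⟨e, rfl⟩ := Nat.exists_eq_add_of_le hll
    have h1 : IsType1 L μ l' m := downM l' hl' m d ht
    exact upL m l' e hlL h1
  refine ⟨part1, ?_⟩
  intro l' m' hl' hnt l m hll hmm ht
  exact hnt (part1 l m (le_trans hll hl') ht l' m' hll hl' hmm)
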